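/- arXiv:1506.08724 — 4 statements merged into one kernel-verified Lean document; each statement's English description precedes it below -/
import Mathlib

section
/- For every nondecreasing sequence μ ∈ ℝⁿ and every integer k with 1 ≤ k ≤ n, there exists a nondecreasing sequence ū ∈ ℝⁿ with at most k constant pieces (i.e., at most k−1 indices i with ū_i < ū_{i+1}) such that |ū_i − μ_i| ≤ (μ_n − μ_1)/(2k) for all i, and consequently (1/n)∑_{i=1}^n (ū_i − μ_i)² ≤ (μ_n − μ_1)²/(4k²). -/
lemma helper_sum_sq (n : ℕ) (hn : 1 ≤ n) (f : ℕ → ℝ) (c : ℝ) (hc : 0 ≤ c)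
    (h : ∀ i ∈ Finset.Icc 1 n, |f i| ≤ c) :
    (1 / (n : ℝ)) * ∑ i ∈ Finset.Icc 1 n, f i ^ 2 ≤ c ^ 2 := by
  have hsum : ∑ i ∈ Finset.Icc 1 n, f i ^ 2 ≤ ∑ _i ∈ Finset.Icc 1 n, c ^ 2 := by
    refine Finset.sum_le_sum fun i hi => ?_
    have h1 := h i hi
    nlinarith [abs_nonneg (f i), sq_abs (f i)]
  have hcard : (Finset.Icc 1 n).card = n := by rw [Nat.card_Icc]; omega
  rw [Finset.sum_const, hcard, nsmul_eq_mul] at hsum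
  have hn' : (0:ℝ) < n := by exact_mod_cast Nat.pos_of_ne_zero (by omega)
  calc (1 / (n : ℝ)) * ∑ i ∈ Finset.Icc 1 n, f i ^ 2
      ≤ (1/(n:ℝ)) * ((n:ℝ) * c^2) := by
        apply mul_le_mul_of_nonneg_left hsum (by positivity)
    _ = c ^ 2 := by field_simp

/-- Piecewise-constant approximation of a nondecreasing sequence
(indices 1,…,n): there is a nondecreasing sequence with at most `k`
constant pieces approximating `μ` within `(μ n - μ 1)/(2k)` in sup norm,
hence within `(μ n - μ 1)²/(4k²)` in scaled squared norm. -/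
theorem stmt_0 (n k : ℕ) (hn : 1 ≤ n) (hk1 : 1 ≤ k) (hkn : k ≤ n)
    (μ : ℕ → ℝ) (hμ : ∀ i ∈ Finset.Ico 1 n, μ i ≤ μ (i + 1)) :
    ∃ u : ℕ → ℝ,
      (∀ i ∈ Finset.Ico 1 n, u i ≤ u (i + 1)) ∧
      ((Finset.Ico 1 n).filter (fun i => u i < u (i + 1))).card ≤ k - 1 ∧
      (∀ i ∈ Finset.Icc 1 n, |u i - μ i| ≤ (μ n - μ 1) / (2 * k)) ∧
      (1 / (n : ℝ)) * ∑ i ∈ Finset.Icc 1 n, (u i - μ i) ^ 2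
        ≤ (μ n - μ 1) ^ 2 / (4 * (k : ℝ) ^ 2) := by
  have hchain : ∀ b a : ℕ, 1 ≤ a → a ≤ b → b ≤ n → μ a ≤ μ b := by
    intro b
    induction b with
    | zero => intro a ha hab _; omega
    | succ b ih =>
      intro a ha hab hbn
      rcases Nat.eq_or_lt_of_le hab with h | h
      · rw [h]
      · have h1 : μ a ≤ μ b := ih a ha (by omega) (by omega)
        have h2 : μ b ≤ μ (b+1) := hμ b (Finset.mem_Ico.2 ⟨by omega, by omega⟩)
        linarith
  set V : ℝ := μ n - μ 1 with hVdef
  have hV0 : 0 ≤ V := by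
    have := hchain n 1 le_rfl hn le_rfl
    simp only [hVdef]; linarith
  have hk' : (0:ℝ) < k := by exact_mod_cast hk1
  have hfinal : ∀ u : ℕ → ℝ,
      (∀ i ∈ Finset.Icc 1 n, |u i - μ i| ≤ V / (2 * k)) →
      (1 / (n : ℝ)) * ∑ i ∈ Finset.Icc 1 n, (u i - μ i) ^ 2
        ≤ V ^ 2 / (4 * (k : ℝ) ^ 2) := by
    intro u hb
    have := helper_sum_sq n hn (fun i => u i - μ i) (V / (2*k)) (by positivity) hb
    calc (1 / (n : ℝ)) * ∑ i ∈ Finset.Icc 1 n, (u i - μ i) ^ 2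
        ≤ (V / (2*k))^2 := this
      _ = V ^ 2 / (4 * (k:ℝ) ^ 2) := by
          rw [div_pow]; congr 1; ring
  rcases eq_or_lt_of_le hV0 with hV | hV
  · -- V = 0, μ constant on [1,n]
    have hconst : ∀ i ∈ Finset.Icc 1 n, μ i = μ 1 := by
      intro i hi
      obtain ⟨hi1, hin⟩ := Finset.mem_Icc.1 hi
      have h1 := hchain i 1 le_rfl hi1 hin
      have h2 := hchain n i hi1 hin le_rfl
      have : μ n = μ 1 := by linarith [hV.symm]
      linarith
    refine ⟨fun _ => μ 1, fun i _ => le_rfl, by simp, ?_, ?_⟩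
    · intro i hi
      rw [hconst i hi]
      simp only [sub_self, abs_zero]
      positivity
    · exact hfinal _ (fun i hi => by rw [hconst i hi]; simp; positivity)
  · -- V > 0
    set m : ℕ → ℕ := fun i => min (k-1) ⌊(k * (μ i - μ 1)) / V⌋₊ with hmdef
    set u : ℕ → ℝ := fun i => μ 1 + V / (2*k) + (V/k) * m i with hudef
    have hmmono : ∀ a b : ℕ, 1 ≤ a → a ≤ b → b ≤ n → m a ≤ m b := by
      intro a b ha hab hbn
      have hμab : μ a ≤ μ b := hchain b a ha hab hbn
      refine min_le_min le_rfl (Nat.floor_le_floor ?_)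
      gcongr
    have humono : ∀ i ∈ Finset.Ico 1 n, u i ≤ u (i + 1) := by
      intro i hi
      obtain ⟨hi1, hin⟩ := Finset.mem_Ico.1 hi
      have hm : m i ≤ m (i+1) := hmmono i (i+1) hi1 (by omega) (by omega)
      have : (m i : ℝ) ≤ m (i+1) := by exact_mod_cast hm
      simp only [hudef]
      have hVk : (0:ℝ) < V / k := by positivity
      nlinarith
    -- error bound
    have hbound : ∀ i ∈ Finset.Icc 1 n, |u i - μ i| ≤ V / (2 * k) := by
      intro i hi
      obtain ⟨hi1, hin⟩ := Finset.mem_Icc.1 hi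
      have h1 : μ 1 ≤ μ i := hchain i 1 le_rfl hi1 hin
      have h2 : μ i ≤ μ n := hchain n i hi1 hin le_rfl
      set t : ℝ := (k * (μ i - μ 1)) / V with htdef
      have ht0 : 0 ≤ t := div_nonneg (mul_nonneg hk'.le (by linarith)) hV0
      have htk : t ≤ k := by
        rw [htdef, div_le_iff₀ hV]
        have : μ i - μ 1 ≤ V := by simp only [hVdef]; linarith
        nlinarith
      have hmeq : m i = min (k-1) ⌊t⌋₊ := rfl
      have hmi_le : (m i : ℝ) ≤ t := by
        calc (m i : ℝ) ≤ (⌊t⌋₊ : ℝ) := by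
              exact_mod_cast min_le_right (k-1) ⌊t⌋₊
          _ ≤ t := Nat.floor_le ht0
      have hmi_ge : t ≤ (m i : ℝ) + 1 := by
        rcases le_or_gt ⌊t⌋₊ (k-1) with h | h
        · have : m i = ⌊t⌋₊ := by rw [hmeq]; omega
          rw [this]
          exact le_of_lt (Nat.lt_floor_add_one t)
        · have hmk : m i = k - 1 := by rw [hmeq]; omega
          rw [hmk]
          have : ((k:ℕ) - 1 : ℕ) + 1 = k := by omega
          have hcast : ((k - 1 : ℕ) : ℝ) + 1 = (k : ℝ) := by
            push_cast [Nat.cast_sub hk1]; ring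
          rw [hcast]; exact htk
      have hμit : μ i - μ 1 = t * V / k := by
        rw [htdef]; field_simp
      have hVk : (0:ℝ) < V / k := by positivity
      rw [abs_le]
      constructor
      · simp only [hudef]
        have : μ i = μ 1 + t * V / k := by linarith
        rw [this]
        have hkne : (k:ℝ) ≠ 0 := ne_of_gt hk'
        have key : 0 ≤ (V/k) * ((m i : ℝ) + 1 - t) := by
          apply mul_nonneg (le_of_lt hVk); linarith
        have expand : μ 1 + V / (2*k) + (V/k) * m i - (μ 1 + t * V / k) + V/(2*k)
            = (V/k) * ((m i : ℝ) + 1 - t) := by field_simp; ring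
        linarith
      · simp only [hudef]
        have : μ i = μ 1 + t * V / k := by linarith
        rw [this]
        have key : 0 ≤ (V/k) * (t - (m i : ℝ)) := by
          apply mul_nonneg (le_of_lt hVk); linarith
        have expand : V/(2*k) - (μ 1 + V / (2*k) + (V/k) * m i - (μ 1 + t * V / k))
            = (V/k) * (t - (m i : ℝ)) := by field_simp; ring
        linarith
    -- jump count
    have hjumps : ((Finset.Ico 1 n).filter (fun i => u i < u (i + 1))).card ≤ k - 1 := by
      have hinj : ∀ i ∈ (Finset.Ico 1 n).filter (fun i => u i < u (i + 1)),
          m (i+1) ∈ Finset.Icc 1 (k-1) := by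
        intro i hi
        obtain ⟨hmem, hlt⟩ := Finset.mem_filter.1 hi
        obtain ⟨hi1, hin⟩ := Finset.mem_Ico.1 hmem
        have hmlt : m i < m (i+1) := by
          by_contra hc
          push_neg at hc
          have : (m (i+1) : ℝ) ≤ m i := by exact_mod_cast hc
          have hVk : (0:ℝ) < V / k := by positivity
          simp only [hudef] at hlt
          nlinarith
        exact Finset.mem_Icc.2 ⟨by omega, min_le_left _ _⟩
      have hstrict : ∀ i ∈ (Finset.Ico 1 n).filter (fun i => u i < u (i + 1)),
          m i < m (i+1) := by
        intro i hi
        obtain ⟨hmem, hlt⟩ := Finset.mem_filter.1 hi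
        by_contra hc
        push_neg at hc
        have : (m (i+1) : ℝ) ≤ m i := by exact_mod_cast hc
        have hVk : (0:ℝ) < V / k := by positivity
        simp only [hudef] at hlt
        nlinarith
      calc ((Finset.Ico 1 n).filter (fun i => u i < u (i + 1))).card
          ≤ (Finset.Icc 1 (k-1)).card := by
            apply Finset.card_le_card_of_injOn (fun i => m (i+1)) hinj
            intro a ha b hb hab
            have hab' : m (a+1) = m (b+1) := hab
            by_contra hne
            rcases Nat.lt_or_ge a b with h | h
            · obtain ⟨hma, _⟩ := Finset.mem_filter.1 ha
              obtain ⟨hmb, _⟩ := Finset.mem_filter.1 hb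
              obtain ⟨ha1, han⟩ := Finset.mem_Ico.1 hma
              obtain ⟨hb1, hbn⟩ := Finset.mem_Ico.1 hmb
              have h1 : m (a+1) ≤ m b := hmmono (a+1) b (by omega) (by omega) (by omega)
              have h2 : m b < m (b+1) := hstrict b hb
              omega
            · have h' : b < a := by omega
              obtain ⟨hma, _⟩ := Finset.mem_filter.1 ha
              obtain ⟨hmb, _⟩ := Finset.mem_filter.1 hb
              obtain ⟨ha1, han⟩ := Finset.mem_Ico.1 hma
              obtain ⟨hb1, hbn⟩ := Finset.mem_Ico.1 hmb
              have h1 : m (b+1) ≤ m a := hmmono (b+1) a (by omega) (by omega) (by omega)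
              have h2 : m a < m (a+1) := hstrict a ha
              omega
        _ = k - 1 := by rw [Nat.card_Icc]; omega
    exact ⟨u, humono, hjumps, hbound, hfinal u hbound⟩
end

section
/- For n ≥ 2 and any subset J ⊆ {1,…,n−1}, with π_J = exp(−|J|)/(H · C(n−1,|J|)) and H = ∑_{i=0}^{n-1} exp(−i), the bound log(1/π_J) ≤ 2(|J|+1)·log(e·n/(|J|+1)) + 1/2 holds. -/
open Real Finset

lemma Hbound (n : ℕ) : (∑ i ∈ Finset.range n, Real.exp (-(i : ℝ))) ≤ Real.exp (1/2) := by
  have hr0 : (0:ℝ) ≤ Real.exp (-1) := (Real.exp_pos _).le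
  have hr1 : Real.exp (-1) < 1 := Real.exp_lt_one_iff.mpr (by norm_num)
  have h1 : (∑ i ∈ Finset.range n, Real.exp (-(i : ℝ)))
      = ∑ i ∈ Finset.range n, (Real.exp (-1))^i := by
    refine Finset.sum_congr rfl fun i _ => ?_
    rw [← Real.exp_nat_mul]; ring_nf
  rw [h1]
  have h2 : ∑ i ∈ Finset.range n, (Real.exp (-1))^i ≤ (1 - Real.exp (-1))⁻¹ := by
    have := Summable.sum_le_tsum (Finset.range n) (fun i _ => pow_nonneg hr0 i)
      (summable_geometric_of_lt_one hr0 hr1)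
    rwa [tsum_geometric_of_lt_one hr0 hr1] at this
  refine h2.trans ?_
  set s := Real.exp (1/2) with hs
  have hs0 : 0 < s := Real.exp_pos _
  have hs2 : s^2 = Real.exp 1 := by rw [hs, sq, ← Real.exp_add]; norm_num
  have he1 : (2.7182818283 : ℝ) < Real.exp 1 := Real.exp_one_gt_d9
  have he2 : Real.exp 1 < 2.7182818286 := Real.exp_one_lt_d9
  have hlb : (1.5:ℝ) ≤ s := by
    have := Real.add_one_le_exp (1/2 : ℝ); linarith
  have hub : s ≤ 1.6488 := by nlinarith [sq_nonneg (s - 1.6488)]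
  have hinv : Real.exp (-1) = 1/(s^2) := by rw [hs2, Real.exp_neg]; ring
  rw [hinv, inv_le_iff_one_le_mul₀ (by nlinarith)]
  have h3 : 1 - 1/s^2 = (s^2 - 1)/s^2 := by field_simp
  rw [h3]
  have h4 : s * ((s^2-1)/s^2) = (s^2-1)/s := by field_simp
  rw [h4, le_div_iff₀ hs0]
  nlinarith

lemma Cbound (n k : ℕ) (hn : 2 ≤ n) (hk : k ≤ n - 1) :
    (Nat.choose (n-1) k : ℝ) ≤ (Real.exp 1 * n / ((k:ℝ)+1))^(k+1) := by
  have hnat : Nat.choose (n-1) k ≤ Nat.choose n (k+1) := by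
    have hn1 : n = (n-1) + 1 := by omega
    rw [hn1, Nat.choose_succ_succ]
    exact Nat.le_add_right _ _
  have h1 : (Nat.choose n (k+1) : ℝ) ≤ (n:ℝ)^(k+1) / ((k+1).factorial : ℝ) :=
    Nat.choose_le_pow_div (k+1) n
  have h2 : ((k+1:ℕ):ℝ)^(k+1) / ((k+1).factorial : ℝ) ≤ Real.exp ((k+1:ℕ):ℝ) :=
    Real.pow_div_factorial_le_exp (x := ((k+1:ℕ):ℝ)) (by positivity) (k+1)
  have hb : (0:ℝ) < (k:ℝ)+1 := by positivity
  have hF : (0:ℝ) < ((k+1).factorial : ℝ) := by exact_mod_cast Nat.factorial_pos (k+1)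
  have hE : Real.exp ((k+1:ℕ):ℝ) = (Real.exp 1)^(k+1) := by
    rw [← Real.exp_one_pow]
  have hcast : ((k+1:ℕ):ℝ) = (k:ℝ)+1 := by push_cast; ring
  calc (Nat.choose (n-1) k : ℝ) ≤ (Nat.choose n (k+1) : ℝ) := by exact_mod_cast hnat
    _ ≤ (n:ℝ)^(k+1) / ((k+1).factorial : ℝ) := h1
    _ ≤ (Real.exp 1 * n / ((k:ℝ)+1))^(k+1) := by
        rw [div_pow, mul_pow, ← hE]
        rw [div_le_div_iff₀ hF (by positivity)]
        have hkey : ((k:ℝ)+1)^(k+1) ≤ Real.exp ((k+1:ℕ):ℝ) * ((k+1).factorial : ℝ) := by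
          rw [div_le_iff₀ hF] at h2
          rw [← hcast]; exact h2
        have hn0 : (0:ℝ) ≤ (n:ℝ)^(k+1) := by positivity
        calc (n:ℝ)^(k+1) * ((k:ℝ)+1)^(k+1)
            ≤ (n:ℝ)^(k+1) * (Real.exp ((k+1:ℕ):ℝ) * ((k+1).factorial : ℝ)) :=
              mul_le_mul_of_nonneg_left hkey hn0
          _ = Real.exp ((k+1:ℕ):ℝ) * (n:ℝ)^(k+1) * ((k+1).factorial : ℝ) := by ring


/-- Bound on the log inverse prior weight:
`log(1/π_J) ≤ 2(|J|+1) log(e n/(|J|+1)) + 1/2` where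
`π_J = exp(-|J|)/(H · C(n-1,|J|))`, `H = ∑_{i=0}^{n-1} exp(-i)`. -/
theorem stmt_2 (n : ℕ) (hn : 2 ≤ n) (J : Finset ℕ) (hJ : J ⊆ Finset.Icc 1 (n - 1)) :
    Real.log (1 /
        (Real.exp (-(J.card : ℝ)) /
          ((∑ i ∈ Finset.range n, Real.exp (-(i : ℝ))) *
            (Nat.choose (n - 1) J.card : ℝ))))
      ≤ 2 * ((J.card : ℝ) + 1) * Real.log (Real.exp 1 * n / ((J.card : ℝ) + 1))
        + 1 / 2 := by
  set k := J.card with hkdef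
  have hk : k ≤ n - 1 := by
    have := Finset.card_le_card hJ
    simpa [Nat.card_Icc] using this
  set H := ∑ i ∈ Finset.range n, Real.exp (-(i : ℝ)) with hHdef
  have hHpos : 0 < H := by
    apply Finset.sum_pos (fun i _ => Real.exp_pos _)
    exact ⟨0, Finset.mem_range.mpr (by omega)⟩
  have hCpos : (0:ℝ) < (Nat.choose (n-1) k : ℝ) := by
    exact_mod_cast Nat.choose_pos hk
  set C := (Nat.choose (n-1) k : ℝ) with hCdef
  set L := Real.log (Real.exp 1 * n / ((k:ℝ)+1)) with hLdef
  have hkn : (k:ℝ) + 1 ≤ (n:ℝ) := by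
    have : k + 1 ≤ n := by omega
    exact_mod_cast this
  have hL1 : 1 ≤ L := by
    rw [hLdef]
    have : Real.exp 1 ≤ Real.exp 1 * n / ((k:ℝ)+1) := by
      rw [le_div_iff₀ (by positivity)]
      nlinarith [Real.exp_pos 1]
    calc (1:ℝ) = Real.log (Real.exp 1) := (Real.log_exp 1).symm
      _ ≤ L := Real.log_le_log (Real.exp_pos 1) this
  -- rewrite the log
  have hsimp : 1 / (Real.exp (-(k : ℝ)) / (H * C)) = H * C * Real.exp (k:ℝ) := by
    rw [one_div_div, Real.exp_neg]
    field_simp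
  rw [hsimp]
  have hlog : Real.log (H * C * Real.exp (k:ℝ))
      = Real.log H + Real.log C + (k:ℝ) := by
    rw [Real.log_mul (by positivity) (Real.exp_ne_zero _),
        Real.log_mul (ne_of_gt hHpos) (ne_of_gt hCpos), Real.log_exp]
  rw [hlog]
  have hH : Real.log H ≤ 1/2 := by
    calc Real.log H ≤ Real.log (Real.exp (1/2)) :=
          Real.log_le_log hHpos (Hbound n)
      _ = 1/2 := Real.log_exp _
  have hC : Real.log C ≤ ((k:ℝ)+1) * L := by
    calc Real.log C ≤ Real.log ((Real.exp 1 * n / ((k:ℝ)+1))^(k+1)) :=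
          Real.log_le_log hCpos (Cbound n k hn hk)
      _ = ((k:ℝ)+1) * L := by rw [Real.log_pow]; push_cast; ring
  have hkL : (k:ℝ) ≤ ((k:ℝ)+1) * L := by nlinarith [Nat.cast_nonneg (α := ℝ) k]
  linarith
end

section
/- Let n ≥ 2, σ > 0, μ ∈ S↑, and k* be defined as min{m ∈ ℕ : m ≥ (V(μ)² n/(σ² log(en)))^{1/3}} (or 1 if the set is empty). Then there exists ū nondecreasing with at most k* pieces such that (1/n)∑_{i=1}^n (ū_i − μ_i)² ≤ (1/4)·max( (σ² V(μ) log(en)/n)^{2/3}, σ² log(en)/n ). -/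
set_option maxHeartbeats 2000000 in
/-- Approximation of a nondecreasing sequence by one with at most `k*` pieces:
with `V = μ n - μ 1` and `k*` the least positive integer with
`k* ≥ (V² n / (σ² log(e n)))^{1/3}` (so `k* = 1` if this quantity is `≤ 1`),
there is a nondecreasing `ū` with at most `k* - 1` jumps such that
`(1/n) ∑ (ū_i - μ_i)² ≤ (1/4) max((σ² V log(e n)/n)^{2/3}, σ² log(e n)/n)`. -/
theorem stmt_7 (n : ℕ) (hn : 2 ≤ n) (σ : ℝ) (hσ : 0 < σ)
    (μ : ℕ → ℝ) (hmono : ∀ i ∈ Finset.Ico 1 n, μ i ≤ μ (i + 1))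
    (kstar : ℕ) (hk1 : 1 ≤ kstar)
    (hkdef : ∀ m : ℕ, 1 ≤ m →
      ((((μ n - μ 1) ^ 2 * n / (σ ^ 2 * Real.log (Real.exp 1 * n))) ^ ((1 : ℝ) / 3)
          ≤ (m : ℝ)) ↔ kstar ≤ m)) :
    ∃ u : ℕ → ℝ,
      (∀ i ∈ Finset.Ico 1 n, u i ≤ u (i + 1)) ∧
      ((Finset.Ico 1 n).filter (fun i => u i < u (i + 1))).card ≤ kstar - 1 ∧
      (1 / (n : ℝ)) * ∑ i ∈ Finset.Icc 1 n, (u i - μ i) ^ 2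
        ≤ (1 / 4) *
          max ((σ ^ 2 * (μ n - μ 1) * Real.log (Real.exp 1 * n) / n) ^ ((2 : ℝ) / 3))
            (σ ^ 2 * Real.log (Real.exp 1 * n) / n) := by
  have hn1 : (1:ℝ) ≤ n := by exact_mod_cast Nat.one_le_of_lt hn
  have hnpos : (0:ℝ) < n := lt_of_lt_of_le one_pos hn1
  have hL : 0 < Real.log (Real.exp 1 * n) := by
    apply Real.log_pos
    nlinarith [Real.exp_one_gt_d9]
  set L := Real.log (Real.exp 1 * n) with hLdef
  have hmono' : ∀ i j : ℕ, 1 ≤ i → i ≤ j → j ≤ n → μ i ≤ μ j := by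
    intro i j h1 hij hjn
    induction j with
    | zero => exact absurd (h1.trans hij) (by omega)
    | succ j ih =>
      rcases eq_or_lt_of_le hij with rfl | hlt
      · exact le_rfl
      · have hij' : i ≤ j := Nat.lt_succ_iff.mp hlt
        have h2 : μ i ≤ μ j := ih hij' (Nat.le_of_succ_le hjn)
        have h3 : μ j ≤ μ (j + 1) :=
          hmono j (Finset.mem_Ico.mpr ⟨le_trans h1 hij', hjn⟩)
        linarith
  have hV0 : 0 ≤ μ n - μ 1 := by
    have := hmono' 1 n le_rfl (by omega) le_rfl; linarith
  have hB : 0 < σ ^ 2 * L / n := by positivity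
  have hmax0 : 0 ≤ max ((σ ^ 2 * (μ n - μ 1) * L / n) ^ ((2:ℝ)/3)) (σ ^ 2 * L / n) :=
    le_trans hB.le (le_max_right _ _)
  rcases eq_or_lt_of_le hV0 with hVz | hVpos
  · -- V = 0 : constant sequence works
    refine ⟨fun _ => μ 1, fun i _ => le_rfl, by simp, ?_⟩
    have hsum : ∑ i ∈ Finset.Icc 1 n, (μ 1 - μ i) ^ 2 = 0 := by
      apply Finset.sum_eq_zero
      intro i hi
      obtain ⟨h1, h2⟩ := Finset.mem_Icc.mp hi
      have a := hmono' 1 i le_rfl h1 h2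
      have b := hmono' i n h1 h2 le_rfl
      have : μ i = μ 1 := by linarith
      rw [this]; ring
    rw [hsum, mul_zero]
    positivity
  · -- V > 0
    have hkR : (0:ℝ) < kstar := by exact_mod_cast hk1
    set V := μ n - μ 1 with hVdef
    set h := V / kstar with hhdef
    have hh : 0 < h := div_pos hVpos hkR
    set b : ℕ → ℕ := fun i => min (kstar - 1) (⌊(μ i - μ 1) / h⌋₊) with hbdef
    set u : ℕ → ℝ := fun i => μ 1 + h * (b i) + h / 2 with hudef
    have hb_le : ∀ i, b i ≤ kstar - 1 := fun i => min_le_left _ _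
    have hbmono : ∀ i j : ℕ, 1 ≤ i → i ≤ j → j ≤ n → b i ≤ b j := by
      intro i j h1 hij hjn
      apply min_le_min le_rfl
      apply Nat.floor_le_floor
      have hle := hmono' i j h1 hij hjn
      gcongr
    have hub : ∀ i j : ℕ, u i < u j ↔ b i < b j := by
      intro i j
      simp only [hudef]
      constructor
      · intro hlt
        have h2 : (b i : ℝ) < b j := by nlinarith
        exact_mod_cast h2
      · intro hlt
        have h2 : (b i : ℝ) < (b j : ℝ) := by exact_mod_cast hlt
        nlinarith
    have humono : ∀ i j : ℕ, 1 ≤ i → i ≤ j → j ≤ n → u i ≤ u j := by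
      intro i j h1 hij hjn
      have := hbmono i j h1 hij hjn
      have h2 : (b i : ℝ) ≤ (b j : ℝ) := by exact_mod_cast this
      simp only [hudef]
      nlinarith
    refine ⟨u, ?_, ?_, ?_⟩
    · intro i hi
      obtain ⟨h1, h2⟩ := Finset.mem_Ico.mp hi
      exact humono i (i+1) h1 (Nat.le_succ i) h2
    · -- jump count
      calc ((Finset.Ico 1 n).filter (fun i => u i < u (i + 1))).card
          ≤ (Finset.Icc 1 (kstar - 1)).card := by
            apply Finset.card_le_card_of_injOn (fun i => b (i + 1))
            · intro i hi
              simp only [Finset.mem_coe, Finset.mem_filter, Finset.mem_Ico] at hi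
              obtain ⟨⟨h1, h2⟩, hlt⟩ := hi
              have hblt : b i < b (i + 1) := (hub i (i+1)).mp hlt
              exact Finset.mem_Icc.mpr ⟨by show 1 ≤ b (i + 1); omega, hb_le _⟩
            · intro i hi j hj hij
              simp only [Finset.mem_coe, Finset.mem_filter, Finset.mem_Ico] at hi hj
              obtain ⟨⟨hi1, hi2⟩, hilt⟩ := hi
              obtain ⟨⟨hj1, hj2⟩, hjlt⟩ := hj
              have hij' : b (i + 1) = b (j + 1) := hij
              by_contra hne
              rcases lt_trichotomy i j with hc | hc | hc
              · have ha : b (i+1) ≤ b j := hbmono (i+1) j (by omega) (by omega) (by omega)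
                have hb2 : b j < b (j+1) := (hub j (j+1)).mp hjlt
                omega
              · exact hne hc
              · have ha : b (j+1) ≤ b i := hbmono (j+1) i (by omega) (by omega) (by omega)
                have hb2 : b i < b (i+1) := (hub i (i+1)).mp hilt
                omega
        _ ≤ kstar - 1 := by
            rw [Nat.card_Icc]; omega
    · -- the error bound
      have hsand : ∀ i : ℕ, 1 ≤ i → i ≤ n →
          (b i : ℝ) * h ≤ μ i - μ 1 ∧ μ i - μ 1 ≤ ((b i : ℝ) + 1) * h := by
        intro i h1 h2
        have ht0 : 0 ≤ μ i - μ 1 := by have := hmono' 1 i le_rfl h1 h2; linarith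
        have htV : μ i - μ 1 ≤ V := by have := hmono' i n h1 h2 le_rfl; rw [hVdef]; linarith
        constructor
        · have hfle : (⌊(μ i - μ 1) / h⌋₊ : ℝ) ≤ (μ i - μ 1) / h :=
            Nat.floor_le (by positivity)
          have hble : (b i : ℝ) ≤ (⌊(μ i - μ 1) / h⌋₊ : ℝ) := by
            exact_mod_cast min_le_right (kstar - 1) _
          calc (b i : ℝ) * h ≤ ((μ i - μ 1) / h) * h := by
                apply mul_le_mul_of_nonneg_right (le_trans hble hfle) hh.le
            _ = μ i - μ 1 := by field_simp
        · rcases le_or_gt (⌊(μ i - μ 1) / h⌋₊) (kstar - 1) with hc | hc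
          · have hbeq : b i = ⌊(μ i - μ 1) / h⌋₊ := min_eq_right hc
            have := Nat.lt_floor_add_one ((μ i - μ 1) / h)
            have h3 : (μ i - μ 1) / h < (b i : ℝ) + 1 := by rw [hbeq]; exact_mod_cast this
            have := (div_lt_iff₀ hh).mp h3
            linarith
          · have hbeq : b i = kstar - 1 := min_eq_left (le_of_lt hc)
            have hks : ((b i : ℝ) + 1) = kstar := by
              rw [hbeq]
              have : (kstar - 1 : ℕ) + 1 = kstar := by omega
              exact_mod_cast congrArg (Nat.cast : ℕ → ℝ) this
            rw [hks]
            calc μ i - μ 1 ≤ V := htV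
              _ = (kstar : ℝ) * h := by rw [hhdef]; field_simp
      have hpt : ∀ i ∈ Finset.Icc 1 n, (u i - μ i) ^ 2 ≤ h ^ 2 / 4 := by
        intro i hi
        obtain ⟨h1, h2⟩ := Finset.mem_Icc.mp hi
        obtain ⟨hlo, hhi⟩ := hsand i h1 h2
        simp only [hudef]
        nlinarith
      have hsum : ∑ i ∈ Finset.Icc 1 n, (u i - μ i) ^ 2 ≤ n * (h ^ 2 / 4) := by
        calc ∑ i ∈ Finset.Icc 1 n, (u i - μ i) ^ 2
            ≤ (Finset.Icc 1 n).card • (h ^ 2 / 4) := Finset.sum_le_card_nsmul _ _ _ hpt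
          _ = n * (h ^ 2 / 4) := by
              rw [Nat.card_Icc, nsmul_eq_mul]
              norm_num
      have hstep1 : (1 / (n : ℝ)) * ∑ i ∈ Finset.Icc 1 n, (u i - μ i) ^ 2
          ≤ (1/4) * (V ^ 2 / (kstar : ℝ) ^ 2) := by
        have : (1 / (n : ℝ)) * ∑ i ∈ Finset.Icc 1 n, (u i - μ i) ^ 2
            ≤ (1 / (n : ℝ)) * (n * (h ^ 2 / 4)) := by
          apply mul_le_mul_of_nonneg_left hsum (by positivity)
        calc (1 / (n : ℝ)) * ∑ i ∈ Finset.Icc 1 n, (u i - μ i) ^ 2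
            ≤ (1 / (n : ℝ)) * (n * (h ^ 2 / 4)) := this
          _ = h ^ 2 / 4 := by field_simp
          _ = (1/4) * (V ^ 2 / (kstar : ℝ) ^ 2) := by
              rw [hhdef]; field_simp
      -- final numeric inequality
      have hfinal : V ^ 2 / (kstar : ℝ) ^ 2
          ≤ max ((σ ^ 2 * V * L / n) ^ ((2:ℝ)/3)) (σ ^ 2 * L / n) := by
        set Y := V ^ 2 * n / (σ ^ 2 * L) with hYdef
        have hYpos : 0 < Y := by
          apply div_pos (mul_pos (pow_pos hVpos 2) hnpos) (by positivity)
        rcases eq_or_lt_of_le hk1 with hke | hkge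
        · -- kstar = 1
          have hX1 : Y ^ ((1:ℝ)/3) ≤ 1 := by
            have := (hkdef 1 le_rfl).mpr (by omega)
            simpa using this
          have hY1 : Y ≤ 1 := by
            have h3 : (Y ^ ((1:ℝ)/3)) ^ (3:ℕ) ≤ 1 :=
              pow_le_one₀ (Real.rpow_nonneg hYpos.le _) hX1
            rwa [← Real.rpow_natCast (Y ^ ((1:ℝ)/3)) 3, ← Real.rpow_mul hYpos.le,
              (by norm_num : (1:ℝ)/3 * (3:ℕ) = 1), Real.rpow_one] at h3
          have hVB : V ^ 2 ≤ σ ^ 2 * L / n := by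
            rw [hYdef] at hY1
            rw [div_le_one (by positivity)] at hY1
            rw [le_div_iff₀ hnpos]
            linarith
          have hkone : (kstar : ℝ) = 1 := by exact_mod_cast hke.symm
          rw [hkone]
          simpa using le_trans (by simpa using hVB) (le_max_right _ _)
        · -- kstar ≥ 2
          have hk2 : 2 ≤ kstar := hkge
          set X := Y ^ ((1:ℝ)/3) with hXdef
          have hXub : X ≤ (kstar : ℝ) := (hkdef kstar hk1).mpr le_rfl
          have hXlb : (1:ℝ) ≤ X := by
            by_contra hc
            push_neg at hc
            have h1 : X ≤ ((kstar - 1 : ℕ) : ℝ) := by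
              have : (1:ℝ) ≤ ((kstar - 1 : ℕ) : ℝ) := by
                exact_mod_cast Nat.one_le_iff_ne_zero.mpr (by omega)
              linarith
            have := (hkdef (kstar - 1) (by omega)).mp h1
            omega
          have hXpos : 0 < X := lt_of_lt_of_le one_pos hXlb
          have hXsq : X ^ 2 ≤ (kstar : ℝ) ^ 2 := by nlinarith
          have hstep : V ^ 2 / (kstar:ℝ) ^ 2 ≤ V ^ 2 / X ^ 2 :=
            div_le_div_of_nonneg_left (by positivity) (by positivity) hXsq
          have hX2 : X ^ 2 = Y ^ ((2:ℝ)/3) := by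
            rw [hXdef, ← Real.rpow_natCast (Y ^ ((1:ℝ)/3)) 2, ← Real.rpow_mul hYpos.le]
            norm_num
          have hA : V ^ 2 / X ^ 2 = (σ ^ 2 * V * L / n) ^ ((2:ℝ)/3) := by
            have hmul : σ ^ 2 * V * L / n * Y = V ^ 3 := by
              rw [hYdef]; field_simp
            have hV3 : (V ^ 3 : ℝ) ^ ((2:ℝ)/3) = V ^ 2 := by
              rw [← Real.rpow_natCast V 3, ← Real.rpow_mul hVpos.le]
              norm_num
            calc V ^ 2 / X ^ 2 = (V ^ 3) ^ ((2:ℝ)/3) / Y ^ ((2:ℝ)/3) := by rw [hV3, hX2]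
              _ = (V ^ 3 / Y) ^ ((2:ℝ)/3) := (Real.div_rpow (by positivity) hYpos.le _).symm
              _ = (σ ^ 2 * V * L / n) ^ ((2:ℝ)/3) := by
                  congr 1
                  rw [div_eq_iff hYpos.ne']
                  exact hmul.symm
          rw [hA] at hstep
          exact le_trans hstep (le_max_left _ _)
      calc (1 / (n : ℝ)) * ∑ i ∈ Finset.Icc 1 n, (u i - μ i) ^ 2
          ≤ (1/4) * (V ^ 2 / (kstar : ℝ) ^ 2) := hstep1
        _ ≤ (1/4) * max ((σ ^ 2 * V * L / n) ^ ((2:ℝ)/3)) (σ ^ 2 * L / n) := by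
            apply mul_le_mul_of_nonneg_left hfinal (by norm_num)
end

section
/- Let n ≥ 3, q ≥ 2 an integer dividing n, m = n/q, γ > 0. Define α_0 = 0, β_0 = 0, and recursively β_j = β_{j−1} + γ + m·α_{j−1}, α_j = 2γ + α_{j−1}. For ω ∈ {0,1}^q define u^ω ∈ ℝⁿ by u^ω_{jm+i} = ω_{j+1}·γ + α_j·(i−1) + β_j for j = 0,…,q−1 and i = 1,…,m. Then u^ω is convex, i.e., 2u^ω_i ≤ u^ω_{i−1} + u^ω_{i+1} for all i = 2,…,n−1. -/
/-- The hypotheses `u^ω` of the convex minimax lower bound are convex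
sequences: with `q ∣ n`, `m = n/q`, `α_0 = β_0 = 0`,
`α_j = 2γ + α_{j-1}`, `β_j = β_{j-1} + γ + m α_{j-1}` and
`u_{jm+i} = ω_{j+1} γ + α_j (i-1) + β_j`, one has
`2 u_i ≤ u_{i-1} + u_{i+1}` for `2 ≤ i ≤ n-1`. -/
theorem stmt_12 (n q : ℕ) (hn : 3 ≤ n) (hq : 2 ≤ q) (hdvd : q ∣ n)
    (m : ℕ) (hm : m = n / q) (γ : ℝ) (hγ : 0 < γ)
    (α β : ℕ → ℝ) (hα0 : α 0 = 0) (hβ0 : β 0 = 0)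
    (hαrec : ∀ j : ℕ, α (j + 1) = 2 * γ + α j)
    (hβrec : ∀ j : ℕ, β (j + 1) = β j + γ + (m : ℝ) * α j)
    (ω : ℕ → ℝ) (hω : ∀ j ∈ Finset.Icc 1 q, ω j = 0 ∨ ω j = 1)
    (u : ℕ → ℝ)
    (hu : ∀ j < q, ∀ i ∈ Finset.Icc 1 m,
      u (j * m + i) = ω (j + 1) * γ + α j * ((i : ℝ) - 1) + β j) :
    ∀ i ∈ Finset.Icc 2 (n - 1), 2 * u i ≤ u (i - 1) + u (i + 1) := by
  have hnqm : n = q * m := by rw [hm, Nat.mul_div_cancel' hdvd]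
  have hm0 : 0 < m := by
    rcases Nat.eq_zero_or_pos m with h | h
    · exfalso; rw [h, Nat.mul_zero] at hnqm; omega
    · exact h
  -- key lemma about consecutive differences
  have key : ∀ j, j < q → ∀ r, 1 ≤ r → r ≤ m → j * m + r < n →
      (α j ≤ u (j * m + r + 1) - u (j * m + r) ∧
       u (j * m + r + 1) - u (j * m + r) ≤ α j + 2 * γ ∧
       (r < m → u (j * m + r + 1) - u (j * m + r) = α j)) := by
    intro j hj r hr1 hrm hkn
    rcases lt_or_eq_of_le hrm with hlt | heq
    · -- interior of a block
      have e1 : u (j * m + r) = ω (j + 1) * γ + α j * ((r : ℝ) - 1) + β j :=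
        hu j hj r (Finset.mem_Icc.mpr ⟨hr1, hrm⟩)
      have e2 : u (j * m + r + 1) =
          ω (j + 1) * γ + α j * (((r + 1 : ℕ) : ℝ) - 1) + β j := by
        have h2 := hu j hj (r + 1) (Finset.mem_Icc.mpr ⟨by omega, hlt⟩)
        rw [show j * m + (r + 1) = j * m + r + 1 from rfl] at h2
        exact h2
      have hd : u (j * m + r + 1) - u (j * m + r) = α j := by
        rw [e1, e2]; push_cast; ring
      exact ⟨by rw [hd], by rw [hd]; linarith, fun _ => hd⟩
    · -- boundary between blocks (after subst, the block length is `r`)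
      subst heq
      have hj1 : j + 1 < q := by
        by_contra h
        have hqle : q ≤ j + 1 := by omega
        have hle : q * r ≤ j * r + r := by
          calc q * r ≤ (j + 1) * r := Nat.mul_le_mul_right r hqle
          _ = j * r + r := by ring
        rw [hnqm] at hkn
        exact absurd hkn (Nat.not_lt.mpr hle)
      have e1 : u (j * r + r) = ω (j + 1) * γ + α j * ((r : ℝ) - 1) + β j :=
        hu j hj r (Finset.mem_Icc.mpr ⟨hr1, le_refl r⟩)
      have hd : u (j * r + r + 1) - u (j * r + r)
          = (ω (j + 2) - ω (j + 1)) * γ + γ + α j := by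
        have h2 := hu (j + 1) hj1 1 (Finset.mem_Icc.mpr ⟨le_refl 1, hr1⟩)
        rw [show (j + 1) * r + 1 = j * r + r + 1 by ring] at h2
        rw [h2, e1, hβrec j]
        have hωe : ω (j + 1 + 1) = ω (j + 2) := by norm_num
        rw [hωe]; push_cast; ring
      have hω1 : ω (j + 1) = 0 ∨ ω (j + 1) = 1 :=
        hω (j + 1) (Finset.mem_Icc.mpr ⟨by omega, by omega⟩)
      have hω2 : ω (j + 2) = 0 ∨ ω (j + 2) = 1 :=
        hω (j + 2) (Finset.mem_Icc.mpr ⟨by omega, by omega⟩)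
      refine ⟨?_, ?_, ?_⟩
      · rcases hω1 with h1 | h1 <;> rcases hω2 with h2 | h2 <;>
          rw [hd, h1, h2] <;> linarith
      · rcases hω1 with h1 | h1 <;> rcases hω2 with h2 | h2 <;>
          rw [hd, h1, h2] <;> linarith
      · intro h; omega
  -- main argument
  intro i hi
  rw [Finset.mem_Icc] at hi
  obtain ⟨hi2, hin⟩ := hi
  obtain ⟨j, s, hjq, hsm, hieq⟩ : ∃ j s, j < q ∧ s < m ∧ i = j * m + s + 1 := by
    refine ⟨(i - 1) / m, (i - 1) % m, ?_, Nat.mod_lt _ hm0, ?_⟩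
    · have hqm : i - 1 < q * m := by rw [← hnqm]; omega
      exact (Nat.div_lt_iff_lt_mul hm0).mpr hqm
    · have hdm : m * ((i - 1) / m) + (i - 1) % m = i - 1 := Nat.div_add_mod (i - 1) m
      rw [Nat.mul_comm] at hdm
      rw [hdm]; omega
  rcases Nat.eq_zero_or_pos s with hs0 | hs1
  · -- i is the first element of block j; j ≥ 1
    subst hs0
    rw [Nat.add_zero] at hieq
    obtain ⟨t, rfl⟩ : ∃ t, j = t + 1 := by
      rcases Nat.eq_zero_or_pos j with h0 | h0
      · exfalso; rw [h0, Nat.zero_mul] at hieq; omega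
      · exact ⟨j - 1, by omega⟩
    rw [show (t + 1) * m = t * m + m by ring] at hieq
    -- hieq : i = t * m + m + 1
    have h2 : t * m + m + 1 = i := hieq.symm
    have h1 : t * m + m = i - 1 := by omega
    have h3 : t * m + m + (1 + 1) = i + 1 := by omega
    have h4 : t * m + m + 1 + 1 = i + 1 := h3
    have hkey1 := key t (by omega) m hm0 (le_refl m) (by rw [h1]; omega)
    have hkey2 := key (t + 1) hjq 1 (le_refl 1) hm0
      (by rw [show (t + 1) * m + 1 = t * m + m + 1 by ring, h2]; omega)
    rw [h2, h1] at hkey1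
    rw [show (t + 1) * m + 1 + 1 = t * m + m + 1 + 1 by ring,
        show (t + 1) * m + 1 = t * m + m + 1 by ring, h4, h2] at hkey2
    have hα : α (t + 1) = 2 * γ + α t := hαrec t
    obtain ⟨_, hub, _⟩ := hkey1
    obtain ⟨hlb, _, _⟩ := hkey2
    linarith
  · -- i is interior: i - 1 = j*m + s with 1 ≤ s < m
    have h2 : j * m + s + 1 = i := hieq.symm
    have h1 : j * m + s = i - 1 := by omega
    have h3 : j * m + (s + 1) = i := by rw [← Nat.add_assoc]; exact h2
    have h4 : j * m + (s + 1) + 1 = i + 1 := by rw [h3]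
    have hkey1 := key j hjq s hs1 (by omega) (by omega)
    have hkey2 := key j hjq (s + 1) (by omega) (by omega) (by rw [h3]; omega)
    rw [h2, h1] at hkey1
    rw [h4, h3] at hkey2
    obtain ⟨_, _, heq⟩ := hkey1
    have heq' := heq hsm
    obtain ⟨hlb, _, _⟩ := hkey2
    linarith
end
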